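/- arXiv:2209.11524 — 2 statements merged into one kernel-verified Lean document; each statement's English description precedes it below -/
import Mathlib

section
/- (Theorem 1, acceleration-controlled unicycle.) Let p, v ∈ ℝ², r > 0, θ ∈ ℝ and l ≠ 0, with ‖p‖ > r and v ≠ 0. Define w = p + (√(‖p‖² − r²)/‖v‖) · v and the row vector L = (⟨w, (−cos θ, −sin θ)⟩, ⟨w, (l sin θ, −l cos θ)⟩) ∈ ℝ². Then L ≠ 0; that is, the Lie derivative L_g h of the collision cone CBF along the input directions of the acceleration-controlled unicycle model never vanishes on the domain ‖p‖ > r, v ≠ 0. -/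
open scoped RealInnerProductSpace

/-- Theorem 1, acceleration-controlled unicycle: with
`w = p + (√(‖p‖² − r²)/‖v‖) • v`, the row vector
`L = (⟪w, (−cos θ, −sin θ)⟫, ⟪w, (l sin θ, −l cos θ)⟫)` is nonzero whenever
`‖p‖ > r > 0`, `v ≠ 0` and `l ≠ 0`. -/
theorem c3bf_unicycle_Lgh_ne_zero (p v : EuclideanSpace ℝ (Fin 2)) (r θ l : ℝ)
    (hr : 0 < r) (hp : r < ‖p‖) (hv : v ≠ 0) (hl : l ≠ 0) :
    (⟪p + (Real.sqrt (‖p‖ ^ 2 - r ^ 2) / ‖v‖) • v,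
        (WithLp.toLp 2 ![-Real.cos θ, -Real.sin θ] : EuclideanSpace ℝ (Fin 2))⟫,
      ⟪p + (Real.sqrt (‖p‖ ^ 2 - r ^ 2) / ‖v‖) • v,
        (WithLp.toLp 2 ![l * Real.sin θ, -(l * Real.cos θ)] : EuclideanSpace ℝ (Fin 2))⟫) ≠
      (0, 0) := by
  set c := Real.sqrt (‖p‖ ^ 2 - r ^ 2) / ‖v‖ with hc
  set w := p + c • v with hwdef
  intro h
  rw [Prod.mk.injEq] at h
  obtain ⟨h1, h2⟩ := h
  simp only [PiLp.inner_apply, Fin.sum_univ_two, RCLike.inner_apply, conj_trivial,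
    Matrix.cons_val_zero, Matrix.cons_val_one, Matrix.head_cons, PiLp.toLp_apply] at h1 h2
  have hpy := Real.sin_sq_add_cos_sq θ
  have h2' : w 0 * Real.sin θ - w 1 * Real.cos θ = 0 := by
    have hll : l * (w 0 * Real.sin θ - w 1 * Real.cos θ) = 0 := by ring_nf; ring_nf at h2; linarith
    exact (mul_eq_zero.mp hll).resolve_left hl
  have hw0 : w 0 = 0 := by linear_combination (-Real.cos θ) * h1 + Real.sin θ * h2' - w 0 * hpy
  have hw1 : w 1 = 0 := by linear_combination (-Real.sin θ) * h1 + (-Real.cos θ) * h2' - w 1 * hpy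
  have hwz : w = 0 := by
    ext i; fin_cases i <;> simpa
  have hpe : p = -(c • v) := by
    have := hwdef.symm.trans hwz
    rw [add_eq_zero_iff_eq_neg] at this
    exact this
  have hc0 : 0 ≤ c := div_nonneg (Real.sqrt_nonneg _) (norm_nonneg _)
  have hnp : ‖p‖ = c * ‖v‖ := by
    rw [hpe, norm_neg, norm_smul, Real.norm_eq_abs, abs_of_nonneg hc0]
  have hcv : c * ‖v‖ = Real.sqrt (‖p‖ ^ 2 - r ^ 2) := by
    rw [hc, div_mul_cancel₀ _ (norm_ne_zero_iff.mpr hv)]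
  have hsq : Real.sqrt (‖p‖ ^ 2 - r ^ 2) ^ 2 = ‖p‖ ^ 2 - r ^ 2 :=
    Real.sq_sqrt (by nlinarith)
  nlinarith [hnp, hcv, hsq]
end

section
/- (C3BF validity for the point-mass double integrator.) Let p, v ∈ ℝ² with ‖p‖ > r > 0 and v ≠ 0, and define w = p + (√(‖p‖² − r²)/‖v‖)·v. For the double integrator ṗ_rel = v_rel, v̇_rel = −u, the input-dependent part of the derivative of the collision cone CBF h = ⟨p, v⟩ + ‖v‖√(‖p‖² − r²) is ⟨w, −u⟩. Since w ≠ 0, for every real number c there exists u ∈ ℝ² with c + ⟨w, −u⟩ ≥ 0; hence the CBF condition sup_{u} [ḣ(x,u) + κ(h)] ≥ 0 holds at every state with ‖p‖ > r and v ≠ 0. -/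
open scoped RealInnerProductSpace

/-- C3BF validity for the point-mass double integrator: with
`w = p + (√(‖p‖² − r²)/‖v‖) • v`, one has `w ≠ 0`, and hence for every `c : ℝ`
there is an input `u ∈ ℝ²` with `c + ⟪w, −u⟫ ≥ 0`, so the CBF condition holds at
every state with `‖p‖ > r` and `v ≠ 0`. -/
theorem c3bf_double_integrator_valid
    (p v : EuclideanSpace ℝ (Fin 2)) (r : ℝ)
    (hr : 0 < r) (hp : r < ‖p‖) (hv : v ≠ 0) :
    p + (Real.sqrt (‖p‖ ^ 2 - r ^ 2) / ‖v‖) • v ≠ 0 ∧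
      ∀ c : ℝ, ∃ u : EuclideanSpace ℝ (Fin 2),
        0 ≤ c + ⟪p + (Real.sqrt (‖p‖ ^ 2 - r ^ 2) / ‖v‖) • v, -u⟫ := by
  set s : ℝ := Real.sqrt (‖p‖ ^ 2 - r ^ 2) with hs
  set w : EuclideanSpace ℝ (Fin 2) := p + (s / ‖v‖) • v with hw
  have hp0 : 0 < ‖p‖ := lt_trans hr hp
  have hwne : w ≠ 0 := by
    intro h
    have hpv : p = -((s / ‖v‖) • v) := by
      have := eq_neg_of_add_eq_zero_left h
      exact this
    have hnorm : ‖p‖ = s := by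
      rw [hpv, norm_neg, norm_smul, norm_div, Real.norm_eq_abs, Real.norm_eq_abs,
        abs_norm, abs_of_nonneg (Real.sqrt_nonneg _)]
      rw [div_mul_cancel₀ _ (norm_ne_zero_iff.mpr hv)]
    have hslt : s < ‖p‖ := by
      have h1 : ‖p‖ ^ 2 - r ^ 2 < ‖p‖ ^ 2 := by nlinarith
      calc s < Real.sqrt (‖p‖ ^ 2) := by
              exact Real.sqrt_lt_sqrt (by nlinarith) h1
        _ = ‖p‖ := by rw [Real.sqrt_sq hp0.le]
    linarith [hnorm, hslt]
  refine ⟨hwne, fun c => ?_⟩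
  have hw2 : (0:ℝ) < ⟪w, w⟫ := by
    rw [real_inner_self_eq_norm_sq]
    exact pow_pos (norm_pos_iff.mpr hwne) 2
  refine ⟨(-|c| / ⟪w, w⟫) • w, ?_⟩
  rw [← neg_smul, inner_smul_right]
  have : - (-|c| / ⟪w, w⟫) * ⟪w, w⟫ = |c| := by
    rw [neg_mul, div_mul_cancel₀ _ hw2.ne', neg_neg]
  rw [this]
  linarith [abs_nonneg c, neg_abs_le c]
end
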